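/- Let p and q be distinct primes and set F(t) = Φ_{pq}(t)·Φ_{p²q}(t)·Φ_{pq²}(t) and G(t) = Φ_{p²q²}(t)·Φ_{pq}(t)·Φ_{pq}(t) in ℤ[t]. Then for every unit v of ℤ̂, the ideals (F(t)) and (G(t^v)) of ℤ̂[[t^ℤ̂]] are distinct; likewise, for f(t) = F(t)²G(t) and g(t) = F(t)G(t)², the ideals (f(t)) and (g(t^v)) of ℤ̂[[t^ℤ̂]] are distinct for every unit v of ℤ̂. -/

import Mathlib

open Polynomial

set_option synthInstance.maxHeartbeats 1000000
set_option maxHeartbeats 1000000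

noncomputable section
noncomputable section

/-- The ring of profinite integers `ẐZ = lim_n ℤ/nℤ`, realized as the subring of
`∏ n : ℕ+, ZMod n` consisting of families compatible under the natural projections. -/
def ZHatSubring : Subring (∀ n : ℕ+, ZMod n) where
  carrier := {f | ∀ (m n : ℕ+) (h : (m : ℕ) ∣ (n : ℕ)), ZMod.castHom h (ZMod m) (f n) = f m}
  mul_mem' := fun {a b} ha hb m n h => by
    simp only [Pi.mul_apply, map_mul, ha m n h, hb m n h]
  one_mem' := fun m n h => map_one _
  add_mem' := fun {a b} ha hb m n h => by
    simp only [Pi.add_apply, map_add, ha m n h, hb m n h]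
  zero_mem' := fun m n h => map_zero _
  neg_mem' := fun {a} ha m n h => by
    simp only [Pi.neg_apply, map_neg, ha m n h]

/-- The profinite integers as a type. -/
abbrev ZHat : Type := ZHatSubring

instance : CommRing ZHat := inferInstance

/-- The quotient ring `R[t]/(tⁿ - 1)`. -/
abbrev CycModN (R : Type) [CommRing R] (n : ℕ+) : Type :=
  Polynomial R ⧸ Ideal.span {(X : Polynomial R) ^ (n : ℕ) - 1}

lemma X_pow_sub_one_dvd {R : Type} [CommRing R] {m n : ℕ} (h : m ∣ n) :
    (X : Polynomial R) ^ m - 1 ∣ (X : Polynomial R) ^ n - 1 := by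
  obtain ⟨k, rfl⟩ := h
  simpa [pow_mul] using sub_dvd_pow_sub_pow ((X : Polynomial R) ^ m) 1 k

/-- The natural transition map `R[t]/(tⁿ-1) → R[t]/(tᵐ-1)` for `m ∣ n`. -/
def cycTransition (R : Type) [CommRing R] {m n : ℕ+} (h : (m : ℕ) ∣ (n : ℕ)) :
    CycModN R n →+* CycModN R m :=
  Ideal.Quotient.factor
    (Ideal.span_singleton_le_span_singleton.mpr (X_pow_sub_one_dvd h))

/-- The completed group ring `R[[t^Ẑ]] = lim_n R[t]/(tⁿ-1)`, realized as the subring of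
`∏ n : ℕ+, R[t]/(tⁿ-1)` of families compatible under the transition maps. -/
def CompletedCycRing (R : Type) [CommRing R] : Subring (∀ n : ℕ+, CycModN R n) where
  carrier := {f | ∀ (m n : ℕ+) (h : (m : ℕ) ∣ (n : ℕ)), cycTransition R h (f n) = f m}
  mul_mem' := fun {a b} ha hb m n h => by
    simp only [Pi.mul_apply, map_mul, ha m n h, hb m n h]
  one_mem' := fun m n h => map_one _
  add_mem' := fun {a b} ha hb m n h => by
    simp only [Pi.add_apply, map_add, ha m n h, hb m n h]
  zero_mem' := fun m n h => map_zero _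
  neg_mem' := fun {a} ha m n h => by
    simp only [Pi.neg_apply, map_neg, ha m n h]

instance completedCycRingCommRing (R : Type) [CommRing R] :
    CommRing (CompletedCycRing R) := inferInstance

/-- The natural ring homomorphism `R[t] → R[[t^Ẑ]]`, `f ↦ (f mod (tⁿ-1))ₙ`. -/
def polyToCompleted (R : Type) [CommRing R] : Polynomial R →+* CompletedCycRing R :=
  RingHom.codRestrict (Pi.ringHom fun n => Ideal.Quotient.mk _) _
    (fun f m n h => by
      first
        | exact Ideal.Quotient.factor_mk _ _
        | rfl
        | simp [cycTransition, RingHom.pi_apply])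

/-- The natural ring homomorphism `ℤ[t] → R[[t^Ẑ]]`. -/
def intPolyEmb (R : Type) [CommRing R] : Polynomial ℤ →+* CompletedCycRing R :=
  (polyToCompleted R).comp (Polynomial.mapRingHom (Int.castRingHom R))


/-- The image of `t` in `R[t]/(tⁿ-1)`. -/
def tGen (R : Type) [CommRing R] (n : ℕ+) : CycModN R n :=
  Ideal.Quotient.mk _ X

lemma tGen_pow_eq_one (R : Type) [CommRing R] (n : ℕ+) : (tGen R n) ^ (n : ℕ) = 1 := by
  have h : (Ideal.Quotient.mk (Ideal.span {(X : Polynomial R) ^ (n : ℕ) - 1}))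
      ((X : Polynomial R) ^ (n : ℕ) - 1) = 0 :=
    Ideal.Quotient.eq_zero_iff_mem.mpr (Ideal.subset_span rfl)
  simpa [tGen, map_sub, map_pow, sub_eq_zero] using h

lemma cycTransition_tGen (R : Type) [CommRing R] {m n : ℕ+} (h : (m : ℕ) ∣ (n : ℕ)) :
    cycTransition R h (tGen R n) = tGen R m :=
  Ideal.Quotient.factor_mk _ _

/-- For `v ∈ Ẑ` and `g ∈ ℤ[t]`, the element `g(t^v)` of `R[[t^Ẑ]]`, whose `n`-th component is
`g(t^{v_n}) mod (tⁿ-1)`, where `v ≡ v_n (mod n)`. -/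
def substPow (R : Type) [CommRing R] (v : ZHat) (g : Polynomial ℤ) : CompletedCycRing R :=
  ⟨fun n => Polynomial.aeval ((tGen R n) ^ ((v.1 n).val)) g, by
    intro m n h
    haveI : NeZero (m : ℕ) := ⟨m.ne_zero⟩
    haveI : NeZero (n : ℕ) := ⟨n.ne_zero⟩
    have hcomm : cycTransition R h (Polynomial.aeval ((tGen R n) ^ ((v.1 n).val)) g)
        = Polynomial.aeval (cycTransition R h ((tGen R n) ^ ((v.1 n).val))) g :=
      (Polynomial.aeval_algHom_apply ((cycTransition R h).toIntAlgHom) _ g).symm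
    have hval : ((v.1 n).val) % (m : ℕ) = ((v.1 m).val) % (m : ℕ) := by
      have hv := v.2 m n h
      have h2 : (v.1 m) = (((v.1 n).val : ℕ) : ZMod (m : ℕ)) := by
        rw [← hv, ZMod.castHom_apply, ← ZMod.natCast_val]
      rw [h2, ZMod.val_natCast]
      exact (Nat.mod_mod_of_dvd _ dvd_rfl).symm
    have hpow : (tGen R m) ^ ((v.1 n).val) = (tGen R m) ^ ((v.1 m).val) := by
      rw [pow_eq_pow_mod _ (tGen_pow_eq_one R m), hval,
        ← pow_eq_pow_mod _ (tGen_pow_eq_one R m)]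
    rw [hcomm, map_pow, cycTransition_tGen, hpow]⟩

section Aux

open Polynomial

/-- Projection of the completed group ring to its `n`-th component. -/
def projAt (R : Type) [CommRing R] (n : ℕ+) : CompletedCycRing R →+* CycModN R n :=
  (Pi.evalRingHom _ n).comp (CompletedCycRing R).subtype

lemma projAt_apply (R : Type) [CommRing R] (n : ℕ+) (x : CompletedCycRing R) :
    projAt R n x = x.1 n := rfl

/-- Functoriality of `CycModN` in the coefficient ring. -/
def cycMap {R S : Type} [CommRing R] [CommRing S] (f : R →+* S) (n : ℕ+) :
    CycModN R n →+* CycModN S n :=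
  Ideal.Quotient.lift _ ((Ideal.Quotient.mk _).comp (mapRingHom f)) (by
    intro a ha
    rw [Ideal.mem_span_singleton] at ha
    obtain ⟨c, rfl⟩ := ha
    simp only [RingHom.comp_apply, coe_mapRingHom, Polynomial.map_mul, Polynomial.map_sub,
      Polynomial.map_pow, Polynomial.map_X, Polynomial.map_one]
    rw [Ideal.Quotient.eq_zero_iff_mem]
    exact Ideal.mul_mem_right _ _ (Ideal.subset_span rfl))

lemma cycMap_mk {R S : Type} [CommRing R] [CommRing S] (f : R →+* S) (n : ℕ+) (g : Polynomial R) :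
    cycMap f n (Ideal.Quotient.mk _ g) = Ideal.Quotient.mk _ (g.map f) :=
  Ideal.Quotient.lift_mk _ _ _

lemma cycMap_tGen {R S : Type} [CommRing R] [CommRing S] (f : R →+* S) (n : ℕ+) :
    cycMap f n (tGen R n) = tGen S n := by
  rw [tGen, cycMap_mk, Polynomial.map_X, tGen]

/-- The ring hom `ZHat →+* ZMod n`. -/
def pNthHom (n : ℕ+) : ZHat →+* ZMod (n : ℕ) :=
  (Pi.evalRingHom (fun m : ℕ+ => ZMod (m : ℕ)) n).comp ZHatSubring.subtype

/-- The substitution `t ↦ t^e` as an endomorphism of `R[t]/(tⁿ-1)`. -/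
def substHom (k : Type) [CommRing k] (n : ℕ+) (e : ℕ) : CycModN k n →+* CycModN k n :=
  Ideal.Quotient.lift _ (eval₂RingHom ((Ideal.Quotient.mk _).comp C) (tGen k n ^ e)) (by
    intro a ha
    rw [Ideal.mem_span_singleton] at ha
    obtain ⟨c, rfl⟩ := ha
    rw [map_mul]
    have h0 : (eval₂RingHom ((Ideal.Quotient.mk _).comp C) (tGen k n ^ e))
        ((X : Polynomial k) ^ (n : ℕ) - 1) = 0 := by
      simp only [coe_eval₂RingHom, eval₂_sub, eval₂_X_pow, eval₂_one]
      rw [← pow_mul, mul_comm e (n : ℕ), pow_mul, tGen_pow_eq_one, one_pow, sub_self]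
    rw [h0, zero_mul])

lemma substHom_mk (k : Type) [CommRing k] (n : ℕ+) (e : ℕ) (g : Polynomial k) :
    substHom k n e (Ideal.Quotient.mk _ g)
      = eval₂ ((Ideal.Quotient.mk _).comp C) (tGen k n ^ e) g :=
  Ideal.Quotient.lift_mk _ _ _

lemma substHom_tGen (k : Type) [CommRing k] (n : ℕ+) (e : ℕ) :
    substHom k n e (tGen k n) = tGen k n ^ e := by
  rw [tGen, substHom_mk]
  exact eval₂_X _ _

lemma substHom_comp (k : Type) [CommRing k] (n : ℕ+) (e e' : ℕ)
    (h : (e * e') % (n : ℕ) = 1 % (n : ℕ)) :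
    (substHom k n e).comp (substHom k n e') = RingHom.id _ := by
  apply Ideal.Quotient.ringHom_ext
  apply Polynomial.ringHom_ext
  · intro a
    simp only [RingHom.comp_apply, RingHom.id_apply]
    rw [substHom_mk, eval₂_C, RingHom.comp_apply, substHom_mk, eval₂_C, RingHom.comp_apply]
  · simp only [RingHom.comp_apply, RingHom.id_apply]
    rw [show (Ideal.Quotient.mk (Ideal.span {(X : Polynomial k) ^ (n : ℕ) - 1})) X = tGen k n
      from rfl, substHom_tGen, map_pow, substHom_tGen, ← pow_mul]
    rw [pow_eq_pow_mod (e * e') (tGen_pow_eq_one k n), h,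
      ← pow_eq_pow_mod 1 (tGen_pow_eq_one k n), pow_one]

end Aux
section Aux2

open Polynomial

lemma aeval_X_int (k : Type) [CommRing k] (c : Polynomial ℤ) :
    aeval (X : Polynomial k) c = c.map (Int.castRingHom k) := by
  have h : (Polynomial.aeval (X : Polynomial k) : Polynomial ℤ →ₐ[ℤ] Polynomial k)
      = (Polynomial.mapRingHom (Int.castRingHom k)).toIntAlgHom := by
    apply Polynomial.algHom_ext
    simp [RingHom.toIntAlgHom_apply]
    exact (Polynomial.map_X (Int.castRingHom k)).symm
  rw [h]
  rfl

lemma aeval_tGen (k : Type) [CommRing k] (n : ℕ+) (c : Polynomial ℤ) :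
    aeval (tGen k n) c = Ideal.Quotient.mk _ (c.map (Int.castRingHom k)) := by
  rw [← aeval_X_int k c, tGen]
  exact (Polynomial.aeval_algHom_apply
    ((Ideal.Quotient.mk (Ideal.span {(X : Polynomial k) ^ (n : ℕ) - 1})).toIntAlgHom)
    X c)

lemma cycMap_aeval {R S : Type} [CommRing R] [CommRing S] (f : R →+* S) (n : ℕ+)
    (x : CycModN R n) (c : Polynomial ℤ) :
    cycMap f n (aeval x c) = aeval (cycMap f n x) c :=
  (Polynomial.aeval_algHom_apply ((cycMap f n).toIntAlgHom) x c).symm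

lemma substHom_aeval (k : Type) [CommRing k] (n : ℕ+) (e : ℕ)
    (x : CycModN k n) (c : Polynomial ℤ) :
    substHom k n e (aeval x c) = aeval (substHom k n e x) c :=
  (Polynomial.aeval_algHom_apply ((substHom k n e).toIntAlgHom) x c).symm

lemma card_quot (p : ℕ) [Fact p.Prime] (n : ℕ+) (c : Polynomial ℤ) (hc : c.Monic)
    (hdvd : c.map (Int.castRingHom (ZMod p)) ∣ (X : Polynomial (ZMod p)) ^ (n : ℕ) - 1) :
    Nat.card ((CycModN (ZMod p) n) ⧸ Ideal.span
      {Ideal.Quotient.mk (Ideal.span {(X : Polynomial (ZMod p)) ^ (n : ℕ) - 1})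
        (c.map (Int.castRingHom (ZMod p)))}) = p ^ c.natDegree := by
  set cbar := c.map (Int.castRingHom (ZMod p)) with hcb
  set I : Ideal (Polynomial (ZMod p)) :=
    Ideal.span {(X : Polynomial (ZMod p)) ^ (n : ℕ) - 1} with hI
  have h1 : Ideal.span {Ideal.Quotient.mk I cbar}
      = (Ideal.span {cbar}).map (Ideal.Quotient.mk I) := by
    rw [Ideal.map_span, Set.image_singleton]
  have h2 : I ⊔ Ideal.span {cbar} = Ideal.span {cbar} :=
    sup_eq_right.mpr (Ideal.span_singleton_le_span_singleton.mpr hdvd)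
  have E : (CycModN (ZMod p) n ⧸ Ideal.span {Ideal.Quotient.mk I cbar})
      ≃+* (Polynomial (ZMod p) ⧸ Ideal.span {cbar}) :=
    (Ideal.quotEquivOfEq h1).trans
      ((DoubleQuot.quotQuotEquivQuotSup I (Ideal.span {cbar})).trans (Ideal.quotEquivOfEq h2))
  rw [Nat.card_congr E.toEquiv]
  have hm : cbar.Monic := hc.map _
  have hA : Nat.card (AdjoinRoot cbar) = p ^ cbar.natDegree := by
    rw [Nat.card_congr (AdjoinRoot.powerBasis' hm).basis.equivFun.toEquiv,
      Nat.card_eq_fintype_card, Fintype.card_fun, ZMod.card, Fintype.card_fin,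
      AdjoinRoot.powerBasis'_dim]
  rw [show (Polynomial (ZMod p) ⧸ Ideal.span {cbar}) = AdjoinRoot cbar from rfl, hA,
    hc.natDegree_map]

end Aux2
section Main

open Polynomial

theorem main_ne (p : ℕ) (hp : p.Prime) (n : ℕ+) (a b : Polynomial ℤ)
    (ha : a.Monic) (hb : b.Monic)
    (hda : a.map (Int.castRingHom (ZMod p)) ∣ (X : Polynomial (ZMod p)) ^ (n : ℕ) - 1)
    (hdb : b.map (Int.castRingHom (ZMod p)) ∣ (X : Polynomial (ZMod p)) ^ (n : ℕ) - 1)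
    (hdeg : a.natDegree ≠ b.natDegree) (v : ZHatˣ) :
    Ideal.span {intPolyEmb ZHat a} ≠ Ideal.span {substPow ZHat (v : ZHat) b} := by
  haveI : Fact p.Prime := ⟨hp⟩
  haveI : NeZero (n : ℕ) := ⟨n.ne_zero⟩
  intro hspan
  have h1 : intPolyEmb ZHat a ∣ substPow ZHat (v : ZHat) b := by
    rw [← Ideal.mem_span_singleton, hspan]
    exact Ideal.mem_span_singleton_self _
  have h2 : substPow ZHat (v : ZHat) b ∣ intPolyEmb ZHat a := by
    rw [← Ideal.mem_span_singleton, ← hspan]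
    exact Ideal.mem_span_singleton_self _
  -- the reduction homomorphism to `(ZMod p)[t]/(tⁿ-1)`
  set ρ : ZHat →+* ZMod p := pNthHom ⟨p, hp.pos⟩ with hρ
  set Ψ : CompletedCycRing ZHat →+* CycModN (ZMod p) n :=
    (cycMap ρ n).comp (projAt ZHat n) with hΨ
  set e : ℕ := (((v : ZHat) : ∀ m : ℕ+, ZMod (m : ℕ)) n).val with he
  set abar := a.map (Int.castRingHom (ZMod p)) with habar
  set bbar := b.map (Int.castRingHom (ZMod p)) with hbbar
  set I : Ideal (Polynomial (ZMod p)) :=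
    Ideal.span {(X : Polynomial (ZMod p)) ^ (n : ℕ) - 1} with hI
  -- images of the two elements
  have hA : Ψ (intPolyEmb ZHat a) = Ideal.Quotient.mk I abar := by
    rw [hΨ, RingHom.comp_apply, projAt_apply]
    have : (intPolyEmb ZHat a).1 n
        = Ideal.Quotient.mk _ (a.map (Int.castRingHom ZHat)) := rfl
    rw [this, cycMap_mk, Polynomial.map_map,
      Subsingleton.elim (ρ.comp (Int.castRingHom ZHat)) (Int.castRingHom (ZMod p))]
  have hB : Ψ (substPow ZHat (v : ZHat) b)
      = substHom (ZMod p) n e (Ideal.Quotient.mk I bbar) := by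
    rw [hΨ, RingHom.comp_apply, projAt_apply]
    have h3 : (substPow ZHat (v : ZHat) b).1 n = aeval ((tGen ZHat n) ^ e) b := rfl
    rw [h3, cycMap_aeval, map_pow, cycMap_tGen, ← aeval_tGen, substHom_aeval, substHom_tGen]
  -- the inverse exponent
  have hunit : IsUnit (((v : ZHat) : ∀ m : ℕ+, ZMod (m : ℕ)) n) := by
    have := (v.isUnit).map (pNthHom n)
    exact this
  set u : (ZMod (n : ℕ))ˣ := hunit.unit with hu
  set e' : ℕ := ((u⁻¹ : (ZMod (n : ℕ))ˣ) : ZMod (n : ℕ)).val with he'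
  have hcast : ((e : ℕ) : ZMod (n : ℕ)) = (u : ZMod (n : ℕ)) := by
    rw [he, ZMod.natCast_val, ZMod.cast_id]
    rfl
  have hee' : (e * e') % (n : ℕ) = 1 % (n : ℕ) := by
    have : ((e * e' : ℕ) : ZMod (n : ℕ)) = ((1 : ℕ) : ZMod (n : ℕ)) := by
      rw [Nat.cast_mul, hcast, he', ZMod.natCast_val, ZMod.cast_id, Nat.cast_one]
      exact u.mul_inv
    exact (ZMod.natCast_eq_natCast_iff _ _ _).mp this
  have he'e : (e' * e) % (n : ℕ) = 1 % (n : ℕ) := by rwa [Nat.mul_comm] at hee'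
  set σ : CycModN (ZMod p) n ≃+* CycModN (ZMod p) n :=
    RingEquiv.ofRingHom (substHom (ZMod p) n e) (substHom (ZMod p) n e')
      (substHom_comp _ _ _ _ hee') (substHom_comp _ _ _ _ he'e) with hσ
  have hσapp : (σ : CycModN (ZMod p) n → CycModN (ZMod p) n) (Ideal.Quotient.mk I bbar)
      = substHom (ZMod p) n e (Ideal.Quotient.mk I bbar) := rfl
  -- span equality downstairs
  have hd1 : Ideal.Quotient.mk I abar ∣ σ (Ideal.Quotient.mk I bbar) := by
    rw [hσapp, ← hA, ← hB]; exact map_dvd Ψ h1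
  have hd2 : σ (Ideal.Quotient.mk I bbar) ∣ Ideal.Quotient.mk I abar := by
    rw [hσapp, ← hA, ← hB]; exact map_dvd Ψ h2
  have hspanR : Ideal.span {Ideal.Quotient.mk I abar}
      = Ideal.span {σ (Ideal.Quotient.mk I bbar)} :=
    le_antisymm (Ideal.span_singleton_le_span_singleton.mpr hd2)
      (Ideal.span_singleton_le_span_singleton.mpr hd1)
  have E2 : (CycModN (ZMod p) n ⧸ Ideal.span {Ideal.Quotient.mk I bbar})
      ≃+* (CycModN (ZMod p) n ⧸ Ideal.span {σ (Ideal.Quotient.mk I bbar)}) :=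
    Ideal.quotientEquiv _ _ σ (by rw [Ideal.map_span, Set.image_singleton]; rfl)
  have c1 : Nat.card (CycModN (ZMod p) n ⧸ Ideal.span {Ideal.Quotient.mk I abar})
      = p ^ a.natDegree := card_quot p n a ha hda
  have c2 : Nat.card (CycModN (ZMod p) n ⧸ Ideal.span {Ideal.Quotient.mk I bbar})
      = p ^ b.natDegree := card_quot p n b hb hdb
  have : p ^ a.natDegree = p ^ b.natDegree := by
    rw [← c1, ← c2, hspanR, Nat.card_congr E2.toEquiv]
  exact hdeg (Nat.pow_right_injective hp.two_le this)

end Main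
section Cyclo

open Polynomial

lemma seven_sq_le (p : ℕ) (hp : 2 ≤ p) : 7 * p ^ 2 ≤ p ^ 5 := by
  have h1 : 7 ≤ p ^ 3 := le_trans (by norm_num) (Nat.pow_le_pow_left hp 3)
  calc 7 * p ^ 2 ≤ p ^ 3 * p ^ 2 := Nat.mul_le_mul_right _ h1
    _ = p ^ 5 := by ring

lemma cyclo_pow_dvd (p q : ℕ) (hp : p.Prime) (hq : q.Prime) (α β : ℕ)
    (hα : α ≤ 7 * p ^ 2) (hβ : β ≤ 7 * p ^ 2) :
    (cyclotomic q (ZMod p)) ^ α * (cyclotomic (q ^ 2) (ZMod p)) ^ β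
      ∣ (X : Polynomial (ZMod p)) ^ (p ^ 5 * q ^ 2) - 1 := by
  haveI : Fact p.Prime := ⟨hp⟩
  haveI : Fact q.Prime := ⟨hq⟩
  set W := cyclotomic q (ZMod p) * cyclotomic (q ^ 2) (ZMod p) with hW
  have hWdvd : W ∣ (X : Polynomial (ZMod p)) ^ (q ^ 2) - 1 := by
    have e1 := cyclotomic_prime_pow_mul_X_pow_sub_one (ZMod p) q 1
    have e0 := cyclotomic_prime_pow_mul_X_pow_sub_one (ZMod p) q 0
    refine ⟨X - 1, ?_⟩
    have e0' : cyclotomic q (ZMod p) * ((X : Polynomial (ZMod p)) - 1)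
        = (X : Polynomial (ZMod p)) ^ q - 1 := by simpa using e0
    have e1' : cyclotomic (q ^ 2) (ZMod p) * ((X : Polynomial (ZMod p)) ^ q - 1)
        = (X : Polynomial (ZMod p)) ^ (q ^ 2) - 1 := by simpa using e1
    calc (X : Polynomial (ZMod p)) ^ (q ^ 2) - 1
        = cyclotomic (q ^ 2) (ZMod p) * ((X : Polynomial (ZMod p)) ^ q - 1) := e1'.symm
      _ = cyclotomic (q ^ 2) (ZMod p) * (cyclotomic q (ZMod p) * (X - 1)) := by rw [e0']
      _ = W * (X - 1) := by rw [hW]; ring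
  have hα5 : α ≤ p ^ 5 := le_trans hα (seven_sq_le p hp.two_le)
  have hβ5 : β ≤ p ^ 5 := le_trans hβ (seven_sq_le p hp.two_le)
  calc (cyclotomic q (ZMod p)) ^ α * (cyclotomic (q ^ 2) (ZMod p)) ^ β
      ∣ (cyclotomic q (ZMod p)) ^ (p ^ 5) * (cyclotomic (q ^ 2) (ZMod p)) ^ (p ^ 5) :=
        mul_dvd_mul (pow_dvd_pow _ hα5) (pow_dvd_pow _ hβ5)
    _ = W ^ (p ^ 5) := (mul_pow _ _ _).symm
    _ ∣ ((X : Polynomial (ZMod p)) ^ (q ^ 2) - 1) ^ (p ^ 5) := pow_dvd_pow_of_dvd hWdvd _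
    _ = (X : Polynomial (ZMod p)) ^ (p ^ 5 * q ^ 2) - 1 := by
        rw [sub_pow_char_pow, ← pow_mul, one_pow, mul_comm (q ^ 2) (p ^ 5)]

end Cyclo
section Arith

open Polynomial

lemma exp_bound (p c1 c2 : ℕ) (h : c1 + c2 ≤ 7) : c1 * (p - 1) + c2 * (p ^ 2 - p) ≤ 7 * p ^ 2 := by
  have t1 : p - 1 ≤ p ^ 2 := le_trans (Nat.sub_le _ _) (Nat.le_self_pow (by norm_num) p)
  have t2 : p ^ 2 - p ≤ p ^ 2 := Nat.sub_le _ _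
  calc c1 * (p - 1) + c2 * (p ^ 2 - p) ≤ c1 * p ^ 2 + c2 * p ^ 2 :=
        Nat.add_le_add (Nat.mul_le_mul_left _ t1) (Nat.mul_le_mul_left _ t2)
    _ = (c1 + c2) * p ^ 2 := (Nat.add_mul _ _ _).symm
    _ ≤ 7 * p ^ 2 := Nat.mul_le_mul_right _ h

lemma deg_ne (p q : ℕ) (hp2 : 2 ≤ p) (hq2 : 2 ≤ q) :
    (p - 1) * (q - 1) + p * (p - 1) * (q - 1) + (p - 1) * (q * (q - 1))
      ≠ p * (p - 1) * (q * (q - 1)) + (p - 1) * (q - 1) + (p - 1) * (q - 1) := by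
  intro h
  have h1 : 1 ≤ p := by omega
  have h1' : 1 ≤ q := by omega
  zify [h1, h1'] at h
  have key : (((p : ℤ) - 1) * ((q : ℤ) - 1)) ^ 2 = 0 := by linear_combination -h
  have key2 : ((p : ℤ) - 1) * ((q : ℤ) - 1) = 0 := by
    exact pow_eq_zero_iff (by norm_num) |>.mp key
  have k1 : (2 : ℤ) ≤ (p : ℤ) := by exact_mod_cast hp2
  have k2 : (2 : ℤ) ≤ (q : ℤ) := by exact_mod_cast hq2
  rcases mul_eq_zero.mp key2 with h' | h' <;> linarith

end Arith
/-- For distinct primes `p, q` and Fried's pair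
`F(t) = Φ_{pq}(t)Φ_{p²q}(t)Φ_{pq²}(t)`, `G(t) = Φ_{p²q²}(t)Φ_{pq}(t)Φ_{pq}(t)`:
for every unit `v` of `Ẑ` the ideals `(F(t))` and `(G(t^v))` of `Ẑ[[t^Ẑ]]` are distinct,
and likewise, with `f = F²G` and `g = FG²`, the ideals `(f(t))` and `(g(t^v))` are
distinct. -/
theorem fried_pair_span_ne
    (p q : ℕ) (hp : p.Prime) (hq : q.Prime) (hpq : p ≠ q)
    (F G : Polynomial ℤ)
    (hF : F = cyclotomic (p * q) ℤ * cyclotomic (p ^ 2 * q) ℤ * cyclotomic (p * q ^ 2) ℤ)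
    (hG : G = cyclotomic (p ^ 2 * q ^ 2) ℤ * cyclotomic (p * q) ℤ * cyclotomic (p * q) ℤ) :
    (∀ v : ZHatˣ,
      Ideal.span {intPolyEmb ZHat F} ≠ Ideal.span {substPow ZHat (v : ZHat) G}) ∧
    (∀ v : ZHatˣ,
      Ideal.span {intPolyEmb ZHat (F ^ 2 * G)}
        ≠ Ideal.span {substPow ZHat (v : ZHat) (F * G ^ 2)}) := by
  haveI : Fact p.Prime := ⟨hp⟩
  haveI : Fact q.Prime := ⟨hq⟩
  have hp2 := hp.two_le
  have hq2 := hq.two_le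
  have hcop : Nat.Coprime p q := (Nat.coprime_primes hp hq).mpr hpq
  have hpq' : ¬ p ∣ q := fun h => hpq ((Nat.prime_dvd_prime_iff_eq hp hq).mp h)
  have hpq2' : ¬ p ∣ q ^ 2 := fun h => hpq' (hp.dvd_of_dvd_pow h)
  set N : ℕ+ := ⟨p ^ 5 * q ^ 2, by positivity⟩ with hN
  -- reductions of the cyclotomic factors mod p
  have c1 : (cyclotomic (p * q) ℤ).map (Int.castRingHom (ZMod p))
      = cyclotomic q (ZMod p) ^ (p - 1) := by
    rw [map_cyclotomic, mul_comm p q, cyclotomic_mul_prime_eq_pow_of_not_dvd (ZMod p) hpq']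
  have c2 : (cyclotomic (p ^ 2 * q) ℤ).map (Int.castRingHom (ZMod p))
      = cyclotomic q (ZMod p) ^ (p ^ 2 - p) := by
    rw [map_cyclotomic]
    have h := cyclotomic_mul_prime_pow_eq (ZMod p) hpq' (k := 2) two_pos
    simpa using h
  have c3 : (cyclotomic (p * q ^ 2) ℤ).map (Int.castRingHom (ZMod p))
      = cyclotomic (q ^ 2) (ZMod p) ^ (p - 1) := by
    rw [map_cyclotomic, mul_comm p (q ^ 2),
      cyclotomic_mul_prime_eq_pow_of_not_dvd (ZMod p) hpq2']
  have c4 : (cyclotomic (p ^ 2 * q ^ 2) ℤ).map (Int.castRingHom (ZMod p))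
      = cyclotomic (q ^ 2) (ZMod p) ^ (p ^ 2 - p) := by
    rw [map_cyclotomic]
    have h := cyclotomic_mul_prime_pow_eq (ZMod p) hpq2' (k := 2) two_pos
    simpa using h
  -- the mod-p normal forms
  have hFmap : F.map (Int.castRingHom (ZMod p))
      = cyclotomic q (ZMod p) ^ (1 * (p - 1) + 1 * (p ^ 2 - p))
        * cyclotomic (q ^ 2) (ZMod p) ^ (1 * (p - 1) + 0 * (p ^ 2 - p)) := by
    rw [hF, Polynomial.map_mul, Polynomial.map_mul, c1, c2, c3]; ring
  have hGmap : G.map (Int.castRingHom (ZMod p))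
      = cyclotomic q (ZMod p) ^ (2 * (p - 1) + 0 * (p ^ 2 - p))
        * cyclotomic (q ^ 2) (ZMod p) ^ (0 * (p - 1) + 1 * (p ^ 2 - p)) := by
    rw [hG, Polynomial.map_mul, Polynomial.map_mul, c4, c1]; ring
  have hFGmap : (F ^ 2 * G).map (Int.castRingHom (ZMod p))
      = cyclotomic q (ZMod p) ^ (4 * (p - 1) + 2 * (p ^ 2 - p))
        * cyclotomic (q ^ 2) (ZMod p) ^ (2 * (p - 1) + 1 * (p ^ 2 - p)) := by
    rw [Polynomial.map_mul, Polynomial.map_pow, hFmap, hGmap]; ring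
  have hGFmap : (F * G ^ 2).map (Int.castRingHom (ZMod p))
      = cyclotomic q (ZMod p) ^ (5 * (p - 1) + 1 * (p ^ 2 - p))
        * cyclotomic (q ^ 2) (ZMod p) ^ (1 * (p - 1) + 2 * (p ^ 2 - p)) := by
    rw [Polynomial.map_mul, Polynomial.map_pow, hFmap, hGmap]; ring
  -- divisibility into X^N - 1
  have hdF : F.map (Int.castRingHom (ZMod p)) ∣ (X : Polynomial (ZMod p)) ^ ((N : ℕ)) - 1 := by
    rw [hFmap]
    exact cyclo_pow_dvd p q hp hq _ _ (exp_bound p 1 1 (by norm_num))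
      (exp_bound p 1 0 (by norm_num))
  have hdG : G.map (Int.castRingHom (ZMod p)) ∣ (X : Polynomial (ZMod p)) ^ ((N : ℕ)) - 1 := by
    rw [hGmap]
    exact cyclo_pow_dvd p q hp hq _ _ (exp_bound p 2 0 (by norm_num))
      (exp_bound p 0 1 (by norm_num))
  have hdFG : (F ^ 2 * G).map (Int.castRingHom (ZMod p))
      ∣ (X : Polynomial (ZMod p)) ^ ((N : ℕ)) - 1 := by
    rw [hFGmap]
    exact cyclo_pow_dvd p q hp hq _ _ (exp_bound p 4 2 (by norm_num))
      (exp_bound p 2 1 (by norm_num))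
  have hdGF : (F * G ^ 2).map (Int.castRingHom (ZMod p))
      ∣ (X : Polynomial (ZMod p)) ^ ((N : ℕ)) - 1 := by
    rw [hGFmap]
    exact cyclo_pow_dvd p q hp hq _ _ (exp_bound p 5 1 (by norm_num))
      (exp_bound p 1 2 (by norm_num))
  -- monicity
  have hFm : F.Monic := by
    rw [hF]; exact ((cyclotomic.monic _ _).mul (cyclotomic.monic _ _)).mul (cyclotomic.monic _ _)
  have hGm : G.Monic := by
    rw [hG]; exact ((cyclotomic.monic _ _).mul (cyclotomic.monic _ _)).mul (cyclotomic.monic _ _)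
  have hF0 : F ≠ 0 := hFm.ne_zero
  have hG0 : G ≠ 0 := hGm.ne_zero
  -- degrees
  have tp : p.totient = p - 1 := Nat.totient_prime hp
  have tq : q.totient = q - 1 := Nat.totient_prime hq
  have tp2 : (p ^ 2).totient = p * (p - 1) := by
    rw [Nat.totient_prime_pow hp two_pos]; norm_num
  have tq2 : (q ^ 2).totient = q * (q - 1) := by
    rw [Nat.totient_prime_pow hq two_pos]; norm_num
  have hdegF : F.natDegree = (p - 1) * (q - 1) + p * (p - 1) * (q - 1) + (p - 1) * (q * (q - 1)) := by
    rw [hF, natDegree_mul (mul_ne_zero (cyclotomic_ne_zero _ ℤ) (cyclotomic_ne_zero _ ℤ))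
      (cyclotomic_ne_zero _ ℤ), natDegree_mul (cyclotomic_ne_zero _ ℤ) (cyclotomic_ne_zero _ ℤ)]
    simp only [natDegree_cyclotomic]
    rw [Nat.totient_mul hcop, Nat.totient_mul ((Nat.Coprime.pow_left 2 hcop)),
      Nat.totient_mul (Nat.Coprime.pow_right 2 hcop), tp, tq, tp2, tq2]
  have hdegG : G.natDegree = p * (p - 1) * (q * (q - 1)) + (p - 1) * (q - 1) + (p - 1) * (q - 1) := by
    rw [hG, natDegree_mul (mul_ne_zero (cyclotomic_ne_zero _ ℤ) (cyclotomic_ne_zero _ ℤ))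
      (cyclotomic_ne_zero _ ℤ), natDegree_mul (cyclotomic_ne_zero _ ℤ) (cyclotomic_ne_zero _ ℤ)]
    simp only [natDegree_cyclotomic]
    rw [Nat.totient_mul hcop, Nat.totient_mul ((Nat.Coprime.pow_left 2 hcop).pow_right 2),
      tp, tq, tp2, tq2]
  have hdne : F.natDegree ≠ G.natDegree := by
    rw [hdegF, hdegG]; exact deg_ne p q hp2 hq2
  constructor
  · intro v
    exact main_ne p hp N F G hFm hGm hdF hdG hdne v
  · intro v
    have hm1 : (F ^ 2 * G).Monic := (hFm.pow 2).mul hGm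
    have hm2 : (F * G ^ 2).Monic := hFm.mul (hGm.pow 2)
    have hd1 : (F ^ 2 * G).natDegree = 2 * F.natDegree + G.natDegree := by
      rw [natDegree_mul (pow_ne_zero _ hF0) hG0, natDegree_pow]
    have hd2 : (F * G ^ 2).natDegree = F.natDegree + 2 * G.natDegree := by
      rw [natDegree_mul hF0 (pow_ne_zero _ hG0), natDegree_pow]
    have hdne2 : (F ^ 2 * G).natDegree ≠ (F * G ^ 2).natDegree := by
      rw [hd1, hd2]; omega
    exact main_ne p hp N (F ^ 2 * G) (F * G ^ 2) hm1 hm2 hdFG hdGF hdne2 v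
end
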